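/- Let C_n = k[X₁,…,X_{n-1}]/(X₁,…,X_{n-1})², the n-dimensional local algebra with square-zero maximal ideal. Any two Z₂-gradings B = B₀ ⊕ B₁ on C_n with dim B₀ = i are isomorphic as superalgebras; that is, there is a graded algebra isomorphism between them. In particular, there are exactly n isomorphism classes of superalgebra structures on C_n, one for each value i = 1, …, n of dim B₀. -/

import Mathlib

open Submodule Module

/-- Glue two linear equivalences along complementary decompositions. -/
theorem stmt6_exists_glue {k M : Type*} [Field k] [AddCommGroup M] [Module k M]
    [FiniteDimensional k M]
    {P Q P' Q' : Submodule k M} (h : IsCompl P Q) (h' : IsCompl P' Q')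
    (h0 : Module.finrank k P = Module.finrank k P')
    (h1 : Module.finrank k Q = Module.finrank k Q') :
    ∃ g : M ≃ₗ[k] M, (∀ x ∈ P, g x ∈ P') ∧ (∀ x ∈ Q, g x ∈ Q') := by
  let e₀ : P ≃ₗ[k] P' := LinearEquiv.ofFinrankEq _ _ h0
  let e₁ : Q ≃ₗ[k] Q' := LinearEquiv.ofFinrankEq _ _ h1
  refine ⟨(Submodule.prodEquivOfIsCompl P Q h).symm ≪≫ₗ
      ((e₀.prodCongr e₁) ≪≫ₗ Submodule.prodEquivOfIsCompl P' Q' h'), ?_, ?_⟩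
  · intro x hx
    lift x to P using hx with x'
    simp only [LinearEquiv.trans_apply, Submodule.prodEquivOfIsCompl_symm_apply_left,
      LinearEquiv.prodCongr_apply, map_zero, Submodule.coe_prodEquivOfIsCompl',
      ZeroMemClass.coe_zero, add_zero]
    exact (e₀ x').2
  · intro x hx
    lift x to Q using hx with x'
    simp only [LinearEquiv.trans_apply, Submodule.prodEquivOfIsCompl_symm_apply_right,
      LinearEquiv.prodCongr_apply, map_zero, Submodule.coe_prodEquivOfIsCompl',
      ZeroMemClass.coe_zero, zero_add]
    exact (e₁ x').2

/-- Any two Z₂-gradings on C_n = k ⊕ V (with V² = 0) whose even parts have the same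
dimension are isomorphic as superalgebras. -/
theorem stmt6 (k A : Type*) [Field k] (hchar : (2 : k) ≠ 0)
    [CommRing A] [Algebra k A] [FiniteDimensional k A]
    (V : Submodule k A) (hV2 : ∀ x ∈ V, ∀ y ∈ V, x * y = 0)
    (hVc : IsCompl (Submodule.span k {(1 : A)}) V)
    (B₀ B₁ : Submodule k A) (hBc : IsCompl B₀ B₁) (hB1 : (1 : A) ∈ B₀)
    (hB00 : ∀ x ∈ B₀, ∀ y ∈ B₀, x * y ∈ B₀)
    (hB01 : ∀ x ∈ B₀, ∀ y ∈ B₁, x * y ∈ B₁)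
    (hB11 : ∀ x ∈ B₁, ∀ y ∈ B₁, x * y ∈ B₀)
    (C₀ C₁ : Submodule k A) (hCc : IsCompl C₀ C₁) (hC1 : (1 : A) ∈ C₀)
    (hC00 : ∀ x ∈ C₀, ∀ y ∈ C₀, x * y ∈ C₀)
    (hC01 : ∀ x ∈ C₀, ∀ y ∈ C₁, x * y ∈ C₁)
    (hC11 : ∀ x ∈ C₁, ∀ y ∈ C₁, x * y ∈ C₀)
    (hdim : Module.finrank k B₀ = Module.finrank k C₀) :
    ∃ φ : A ≃ₐ[k] A,
      Submodule.map (φ : A →ₗ[k] A) B₀ = C₀ ∧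
      Submodule.map (φ : A →ₗ[k] A) B₁ = C₁ := by
  rcases subsingleton_or_nontrivial A with hA | hA
  · exact ⟨AlgEquiv.refl, Subsingleton.elim _ _, Subsingleton.elim _ _⟩
  set S := Submodule.span k {(1 : A)} with hS
  have h1S : (1 : A) ∈ S := Submodule.mem_span_singleton_self 1
  -- odd parts are contained in V
  have hodd : ∀ (D₀ D₁ : Submodule k A), IsCompl D₀ D₁ → (1 : A) ∈ D₀ →
      (∀ x ∈ D₁, ∀ y ∈ D₁, x * y ∈ D₀) → D₁ ≤ V := by
    intro D₀ D₁ hDc hD1 hD11 x hx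
    obtain ⟨u, v, huv, -⟩ := Submodule.existsUnique_add_of_isCompl hVc x
    obtain ⟨lam, hlam⟩ := Submodule.mem_span_singleton.1 u.2
    have hvv : (v : A) * v = 0 := hV2 _ v.2 _ v.2
    have hx' : x = lam • (1 : A) + v := by rw [hlam]; exact huv.symm
    have hkey : (2 * lam) • x = x * x + (lam * lam) • (1 : A) := by
      rw [hx']
      simp only [Algebra.smul_def, map_mul, map_ofNat, mul_one]
      linear_combination -hvv
    have hmem0 : (2 * lam) • x ∈ D₀ := by
      rw [hkey]; exact add_mem (hD11 x hx x hx) (Submodule.smul_mem _ _ hD1)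
    have hmem1 : (2 * lam) • x ∈ D₁ := Submodule.smul_mem _ _ hx
    have hzero : (2 * lam) • x = 0 := by
      have hb : (2 * lam) • x ∈ D₀ ⊓ D₁ := ⟨hmem0, hmem1⟩
      rw [hDc.inf_eq_bot] at hb
      exact (Submodule.mem_bot k).1 hb
    rcases eq_or_ne lam 0 with h0 | h0
    · have hu0 : (u : A) = 0 := by rw [← hlam, h0, zero_smul]
      rw [← huv, hu0, zero_add]; exact v.2
    · have h2 : (2 * lam) ≠ 0 := mul_ne_zero hchar h0
      rcases smul_eq_zero.1 hzero with h | h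
      · exact absurd h h2
      · rw [h]; exact V.zero_mem
  have hB1V : B₁ ≤ V := hodd B₀ B₁ hBc hB1 hB11
  have hC1V : C₁ ≤ V := hodd C₀ C₁ hCc hC1 hC11
  -- even parts decompose as S ⊔ (D₀ ⊓ V)
  have heven : ∀ (D₀ D₁ : Submodule k A), IsCompl D₀ D₁ → (1 : A) ∈ D₀ →
      D₀ = S ⊔ (D₀ ⊓ V) := by
    intro D₀ D₁ hDc hD1
    have hSD : S ≤ D₀ := Submodule.span_le.2 (by simpa using hD1)
    apply le_antisymm
    · intro x hx
      obtain ⟨u, v, huv, -⟩ := Submodule.existsUnique_add_of_isCompl hVc x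
      have hvD : (v : A) ∈ D₀ := by
        have hsub := Submodule.sub_mem D₀ hx (hSD u.2)
        rwa [← huv, add_sub_cancel_left] at hsub
      rw [← huv]
      exact Submodule.add_mem_sup u.2 ⟨hvD, v.2⟩
    · exact sup_le hSD inf_le_left
  have hB0eq : B₀ = S ⊔ (B₀ ⊓ V) := heven B₀ B₁ hBc hB1
  have hC0eq : C₀ = S ⊔ (C₀ ⊓ V) := heven C₀ C₁ hCc hC1
  set V₀ := B₀ ⊓ V with hV₀def
  set W₀ := C₀ ⊓ V with hW₀def
  -- dimension bookkeeping
  have hSdisj : ∀ D : Submodule k A, D ≤ V → S ⊓ D = ⊥ := by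
    intro D hD
    rw [eq_bot_iff, ← hVc.inf_eq_bot]
    exact inf_le_inf_left S hD
  have hrank0 : finrank k V₀ = finrank k W₀ := by
    have h1 := Submodule.finrank_sup_add_finrank_inf_eq S V₀
    have h2 := Submodule.finrank_sup_add_finrank_inf_eq S W₀
    rw [← hB0eq, hSdisj V₀ inf_le_right, finrank_bot] at h1
    rw [← hC0eq, hSdisj W₀ inf_le_right, finrank_bot] at h2
    omega
  have hrank1 : finrank k B₁ = finrank k C₁ := by
    have h1 := Submodule.finrank_add_eq_of_isCompl hBc
    have h2 := Submodule.finrank_add_eq_of_isCompl hCc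
    omega
  -- pull back to submodules of V
  set V₀' : Submodule k V := V₀.comap V.subtype with hV₀'def
  set B₁' : Submodule k V := B₁.comap V.subtype with hB₁'def
  set W₀' : Submodule k V := W₀.comap V.subtype with hW₀'def
  set C₁' : Submodule k V := C₁.comap V.subtype with hC₁'def
  have hcompl : ∀ (P Q : Submodule k A), P ≤ V → Q ≤ V → P ⊓ Q = ⊥ → P ⊔ Q = V →
      IsCompl (P.comap V.subtype) (Q.comap V.subtype) := by
    intro P Q hP hQ hPQ hsup
    constructor
    · rw [disjoint_iff, eq_bot_iff]
      intro x hx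
      have h1 : (x : A) ∈ P ⊓ Q := ⟨Submodule.mem_comap.1 hx.1, Submodule.mem_comap.1 hx.2⟩
      rw [hPQ] at h1
      have : (x : A) = 0 := (Submodule.mem_bot k).1 h1
      simpa using Subtype.ext this
    · rw [codisjoint_iff, eq_top_iff]
      intro x _
      have hxV : (x : A) ∈ P ⊔ Q := by rw [hsup]; exact x.2
      obtain ⟨p, hp, q, hq, hpq⟩ := Submodule.mem_sup.1 hxV
      refine Submodule.mem_sup.2 ⟨⟨p, hP hp⟩, Submodule.mem_comap.2 hp,
        ⟨q, hQ hq⟩, Submodule.mem_comap.2 hq, Subtype.ext hpq⟩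
  have hVdecompB : V₀ ⊔ B₁ = V := by
    apply le_antisymm (sup_le inf_le_right hB1V)
    intro x hx
    have hxt : x ∈ B₀ ⊔ B₁ := by rw [hBc.sup_eq_top]; trivial
    obtain ⟨p, hp, q, hq, hpq⟩ := Submodule.mem_sup.1 hxt
    have hqV : q ∈ V := hB1V hq
    have hpV : p ∈ V := by
      have := Submodule.sub_mem V hx hqV
      rwa [← hpq, add_sub_cancel_right] at this
    rw [← hpq]
    exact Submodule.add_mem_sup ⟨hp, hpV⟩ hq
  have hVdecompC : W₀ ⊔ C₁ = V := by
    apply le_antisymm (sup_le inf_le_right hC1V)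
    intro x hx
    have hxt : x ∈ C₀ ⊔ C₁ := by rw [hCc.sup_eq_top]; trivial
    obtain ⟨p, hp, q, hq, hpq⟩ := Submodule.mem_sup.1 hxt
    have hqV : q ∈ V := hC1V hq
    have hpV : p ∈ V := by
      have := Submodule.sub_mem V hx hqV
      rwa [← hpq, add_sub_cancel_right] at this
    rw [← hpq]
    exact Submodule.add_mem_sup ⟨hp, hpV⟩ hq
  have hinfB : V₀ ⊓ B₁ = ⊥ := by
    rw [eq_bot_iff, ← hBc.inf_eq_bot]
    exact inf_le_inf_right B₁ inf_le_left
  have hinfC : W₀ ⊓ C₁ = ⊥ := by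
    rw [eq_bot_iff, ← hCc.inf_eq_bot]
    exact inf_le_inf_right C₁ inf_le_left
  have hcB : IsCompl V₀' B₁' := hcompl V₀ B₁ inf_le_right hB1V hinfB hVdecompB
  have hcC : IsCompl W₀' C₁' := hcompl W₀ C₁ inf_le_right hC1V hinfC hVdecompC
  have frk : ∀ (P : Submodule k A) (h : P ≤ V), finrank k (P.comap V.subtype) = finrank k P :=
    fun P h => (Submodule.comapSubtypeEquivOfLe h).finrank_eq
  have he₀ : finrank k V₀' = finrank k W₀' := by
    rw [hV₀'def, hW₀'def, frk _ inf_le_right, frk _ inf_le_right, hrank0]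
  have he₁ : finrank k B₁' = finrank k C₁' := by
    rw [hB₁'def, hC₁'def, frk _ hB1V, frk _ hC1V, hrank1]
  obtain ⟨g, hg0, hg1⟩ := stmt6_exists_glue hcB hcC he₀ he₁
  -- build the linear equivalence on A
  set πS : A →ₗ[k] S := S.linearProjOfIsCompl V hVc with hπS
  set πV : A →ₗ[k] V := V.linearProjOfIsCompl S hVc.symm with hπV
  have hsum : ∀ x : A, (↑(πS x) : A) + ↑(πV x) = x := fun x =>
    Submodule.projection_add_projection_eq_self hVc x
  set φlin : A ≃ₗ[k] A := (Submodule.prodEquivOfIsCompl S V hVc).symm ≪≫ₗ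
      (((LinearEquiv.refl k S).prodCongr g) ≪≫ₗ Submodule.prodEquivOfIsCompl S V hVc) with hφlin
  have hsymmSV : ∀ x : A, (Submodule.prodEquivOfIsCompl S V hVc).symm x = (πS x, πV x) := by
    intro x
    have h1 : Submodule.prodEquivOfIsCompl S V hVc (πS x, πV x) = x := by
      rw [Submodule.coe_prodEquivOfIsCompl']; exact hsum x
    exact (LinearEquiv.symm_apply_eq _).2 h1.symm
  have hφ : ∀ x : A, φlin x = ↑(πS x) + ↑(g (πV x)) := by
    intro x
    have h1 : φlin x = Submodule.prodEquivOfIsCompl S V hVc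
        (((LinearEquiv.refl k S).prodCongr g) ((Submodule.prodEquivOfIsCompl S V hVc).symm x)) := rfl
    rw [h1, hsymmSV, LinearEquiv.prodCongr_apply, Submodule.coe_prodEquivOfIsCompl']
    rfl
  have hφS : ∀ x ∈ S, φlin x = x := by
    intro x hx
    rw [hφ, show πS x = ⟨x, hx⟩ from Submodule.linearProjOfIsCompl_apply_left hVc ⟨x, hx⟩,
      show πV x = 0 from Submodule.linearProjOfIsCompl_apply_right' hVc.symm (x := x) hx, map_zero]
    simp
  have hφV : ∀ (x : A) (hx : x ∈ V), φlin x = ↑(g ⟨x, hx⟩) := by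
    intro x hx
    rw [hφ, show πV x = ⟨x, hx⟩ from Submodule.linearProjOfIsCompl_apply_left hVc.symm ⟨x, hx⟩,
      show πS x = 0 from Submodule.linearProjOfIsCompl_apply_right' hVc (x := x) hx]
    simp
  have hone : φlin 1 = 1 := hφS 1 h1S
  have hmulV : ∀ (a b : k) (v w : A), v ∈ V → w ∈ V →
      (a • (1 : A) + v) * (b • (1 : A) + w) = (a * b) • (1 : A) + (a • w + b • v) := by
    intro a b v w hv hw
    have hvw : v * w = 0 := hV2 _ hv _ hw
    simp only [Algebra.smul_def, mul_one, map_mul]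
    linear_combination hvw
  have hmul : ∀ x y : A, φlin (x * y) = φlin x * φlin y := by
    intro x y
    obtain ⟨lam, hlam⟩ := Submodule.mem_span_singleton.1 (πS x).2
    obtain ⟨mu, hmu⟩ := Submodule.mem_span_singleton.1 (πS y).2
    have hvV : (↑(πV x) : A) ∈ V := (πV x).2
    have hwV : (↑(πV y) : A) ∈ V := (πV y).2
    have hx' : x = lam • (1 : A) + ↑(πV x) := by rw [hlam]; exact (hsum x).symm
    have hy' : y = mu • (1 : A) + ↑(πV y) := by rw [hmu]; exact (hsum y).symm
    have hvw : (↑(πV x) : A) * ↑(πV y) = 0 := hV2 _ hvV _ hwV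
    have hmemV : lam • (↑(πV y) : A) + mu • ↑(πV x) ∈ V :=
      add_mem (V.smul_mem _ hwV) (V.smul_mem _ hvV)
    have hxy : x * y = (lam * mu) • (1 : A) + (lam • (↑(πV y) : A) + mu • ↑(πV x)) := by
      rw [← hmulV lam mu _ _ hvV hwV, ← hx', ← hy']
    have hsub : (⟨lam • (↑(πV y) : A) + mu • ↑(πV x), hmemV⟩ : V) = lam • (πV y) + mu • (πV x) :=
      rfl
    have h1 : φlin (x * y) =
        (lam * mu) • (1 : A) + (lam • (↑(g (πV y)) : A) + mu • ↑(g (πV x))) := by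
      rw [hxy, map_add, map_smul, hone, hφV _ hmemV, hsub]
      simp [map_add, map_smul]
    have hgv : (↑(g (πV x)) : A) ∈ V := (g (πV x)).2
    have hgw : (↑(g (πV y)) : A) ∈ V := (g (πV y)).2
    have hgvw : (↑(g (πV x)) : A) * ↑(g (πV y)) = 0 := hV2 _ hgv _ hgw
    have h2 : φlin x * φlin y =
        (lam * mu) • (1 : A) + (lam • (↑(g (πV y)) : A) + mu • ↑(g (πV x))) := by
      rw [hφ x, hφ y, ← hlam, ← hmu, hmulV lam mu _ _ hgv hgw]
    rw [h1, h2]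
  refine ⟨AlgEquiv.ofLinearEquiv φlin hone hmul, ?_, ?_⟩
  · -- map of B₀ is C₀
    have hco : ((AlgEquiv.ofLinearEquiv φlin hone hmul : A ≃ₐ[k] A) : A →ₗ[k] A)
        = (φlin : A →ₗ[k] A) := LinearMap.ext fun x => rfl
    rw [hco]
    apply Submodule.eq_of_le_of_finrank_eq
    · rintro _ ⟨x, hx, rfl⟩
      rw [hB0eq] at hx
      obtain ⟨s, hs, v, hv, rfl⟩ := Submodule.mem_sup.1 hx
      have hvV : v ∈ V := hv.2
      show φlin (s + v) ∈ C₀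
      rw [map_add, hφS s hs, hφV v hvV]
      have hSC : S ≤ C₀ := Submodule.span_le.2 (by simpa using hC1)
      refine add_mem (hSC hs) ?_
      have hmem : (⟨v, hvV⟩ : V) ∈ V₀' := Submodule.mem_comap.2 hv
      have := hg0 _ hmem
      exact (Submodule.mem_inf.1 (Submodule.mem_comap.1 this)).1
    · rw [LinearEquiv.finrank_map_eq]; exact hdim
  · have hco : ((AlgEquiv.ofLinearEquiv φlin hone hmul : A ≃ₐ[k] A) : A →ₗ[k] A)
        = (φlin : A →ₗ[k] A) := LinearMap.ext fun x => rfl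
    rw [hco]
    apply Submodule.eq_of_le_of_finrank_eq
    · rintro _ ⟨x, hx, rfl⟩
      have hxV : x ∈ V := hB1V hx
      show φlin x ∈ C₁
      rw [hφV x hxV]
      have hmem : (⟨x, hxV⟩ : V) ∈ B₁' := Submodule.mem_comap.2 hx
      have := hg1 _ hmem
      exact Submodule.mem_comap.1 this
    · rw [LinearEquiv.finrank_map_eq]; exact hrank1
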